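/- Let ℓ be an odd prime and U a closed subgroup of V_ℓ = I + ℓ·M₂(ℤ_ℓ) ⊆ GL₂(ℤ_ℓ). If U surjects onto V_ℓ/V_{ℓ²}, then U = V_ℓ. -/

import Mathlib

open Matrix

namespace VLAux

variable {ℓ : ℕ} [Fact (Nat.Prime ℓ)]

/-- Entrywise congruence mod `ℓ^n` for 2×2 matrices over `ℤ_ℓ`. -/
def Cong (n : ℕ) (A B : Matrix (Fin 2) (Fin 2) ℤ_[ℓ]) : Prop :=
  ∀ i j, ((ℓ : ℤ_[ℓ]) ^ n) ∣ (A - B) i j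

lemma Cong.symm {n : ℕ} {A B : Matrix (Fin 2) (Fin 2) ℤ_[ℓ]} (h : Cong n A B) :
    Cong n B A := fun i j => by
  have := (h i j).neg_right
  simpa using this

lemma Cong.trans {n : ℕ} {A B C : Matrix (Fin 2) (Fin 2) ℤ_[ℓ]} (h : Cong n A B)
    (h' : Cong n B C) : Cong n A C := fun i j => by
  have := dvd_add (h i j) (h' i j)
  simpa using this

lemma Cong.mono {m n : ℕ} (hmn : m ≤ n) {A B : Matrix (Fin 2) (Fin 2) ℤ_[ℓ]}
    (h : Cong n A B) : Cong m A B := fun i j =>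
  dvd_trans (pow_dvd_pow _ hmn) (h i j)

lemma Cong.mul_right {n : ℕ} {A B : Matrix (Fin 2) (Fin 2) ℤ_[ℓ]} (h : Cong n A B)
    (C : Matrix (Fin 2) (Fin 2) ℤ_[ℓ]) : Cong n (A * C) (B * C) := fun i j => by
  simp only [Matrix.sub_apply, Matrix.mul_apply, ← Finset.sum_sub_distrib, ← sub_mul]
  refine Finset.dvd_sum fun k _ => ?_
  have := h i k
  rw [Matrix.sub_apply] at this
  exact this.mul_right _

lemma Cong.mul_left {n : ℕ} {A B : Matrix (Fin 2) (Fin 2) ℤ_[ℓ]} (h : Cong n A B)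
    (C : Matrix (Fin 2) (Fin 2) ℤ_[ℓ]) : Cong n (C * A) (C * B) := fun i j => by
  simp only [Matrix.sub_apply, Matrix.mul_apply, ← Finset.sum_sub_distrib, ← mul_sub]
  refine Finset.dvd_sum fun k _ => ?_
  have := h k j
  rw [Matrix.sub_apply] at this
  exact this.mul_left _

/-- Extract the "quotient matrix" from a congruence. -/
lemma Cong.exists_eq {n : ℕ} {A B : Matrix (Fin 2) (Fin 2) ℤ_[ℓ]} (h : Cong n A B) :
    ∃ D : Matrix (Fin 2) (Fin 2) ℤ_[ℓ], A = B + ((ℓ : ℤ_[ℓ]) ^ n) • D := by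
  refine ⟨fun i j => (h i j).choose, ?_⟩
  ext i j
  simp only [Matrix.add_apply, Matrix.smul_apply, smul_eq_mul]
  show A i j = B i j + (ℓ : ℤ_[ℓ]) ^ n * (h i j).choose
  exact sub_eq_iff_eq_add'.mp (h i j).choose_spec

lemma map_eq_iff_cong (n : ℕ) (x y : GL (Fin 2) ℤ_[ℓ]) :
    Matrix.GeneralLinearGroup.map (PadicInt.toZModPow n : ℤ_[ℓ] →+* ZMod (ℓ ^ n)) x =
      Matrix.GeneralLinearGroup.map (PadicInt.toZModPow n : ℤ_[ℓ] →+* ZMod (ℓ ^ n)) y ↔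
    Cong n (x : Matrix (Fin 2) (Fin 2) ℤ_[ℓ]) (y : Matrix (Fin 2) (Fin 2) ℤ_[ℓ]) := by
  rw [Units.ext_iff]
  show (PadicInt.toZModPow n).mapMatrix (x : Matrix (Fin 2) (Fin 2) ℤ_[ℓ]) =
    (PadicInt.toZModPow n).mapMatrix (y : Matrix (Fin 2) (Fin 2) ℤ_[ℓ]) ↔ _
  rw [Matrix.ext_iff.symm]
  constructor
  · intro h i j
    have h2 : PadicInt.toZModPow n (((x : Matrix (Fin 2) (Fin 2) ℤ_[ℓ]) -
        (y : Matrix (Fin 2) (Fin 2) ℤ_[ℓ])) i j) = 0 := by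
      have := h i j
      rw [RingHom.mapMatrix_apply, RingHom.mapMatrix_apply, Matrix.map_apply, Matrix.map_apply] at this
      rw [Matrix.sub_apply, map_sub, this, sub_self]
    have h3 : ((x : Matrix (Fin 2) (Fin 2) ℤ_[ℓ]) - y) i j ∈
        RingHom.ker (PadicInt.toZModPow n : ℤ_[ℓ] →+* ZMod (ℓ ^ n)) := h2
    rw [PadicInt.ker_toZModPow, Ideal.mem_span_singleton] at h3
    exact h3
  · intro h i j
    have h3 := h i j
    rw [← Ideal.mem_span_singleton, ← PadicInt.ker_toZModPow] at h3
    have h2 : PadicInt.toZModPow n (((x : Matrix (Fin 2) (Fin 2) ℤ_[ℓ]) - y) i j) = 0 := h3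
    rw [Matrix.sub_apply, map_sub, sub_eq_zero] at h2
    rw [RingHom.mapMatrix_apply, RingHom.mapMatrix_apply, Matrix.map_apply, Matrix.map_apply]
    exact h2

lemma mem_ker_iff_cong (n : ℕ) (x : GL (Fin 2) ℤ_[ℓ]) :
    x ∈ (Matrix.GeneralLinearGroup.map
      (PadicInt.toZModPow n : ℤ_[ℓ] →+* ZMod (ℓ ^ n))).ker ↔
    Cong n (x : Matrix (Fin 2) (Fin 2) ℤ_[ℓ]) 1 := by
  rw [MonoidHom.mem_ker, ← map_one (Matrix.GeneralLinearGroup.map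
      (PadicInt.toZModPow n : ℤ_[ℓ] →+* ZMod (ℓ ^ n))), map_eq_iff_cong]
  simp [Cong]

lemma isUnit_of_cong_one {B : Matrix (Fin 2) (Fin 2) ℤ_[ℓ]} (h : Cong 1 B 1) : IsUnit B := by
  have hp : Nat.Prime ℓ := Fact.out
  rw [Matrix.isUnit_iff_isUnit_det]
  by_contra hu
  have hmem : B.det ∈ IsLocalRing.maximalIdeal ℤ_[ℓ] := hu
  rw [PadicInt.maximalIdeal_eq_span_p, Ideal.mem_span_singleton] at hmem
  have hmap : (PadicInt.toZModPow 1 : ℤ_[ℓ] →+* ZMod (ℓ ^ 1)).mapMatrix B = 1 := by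
    ext i j
    rw [Matrix.one_apply]
    have h2 : PadicInt.toZModPow 1 ((B - 1) i j) = 0 := by
      have := h i j
      rw [← Ideal.mem_span_singleton, ← PadicInt.ker_toZModPow 1] at this
      exact this
    rw [Matrix.sub_apply, map_sub, sub_eq_zero] at h2
    simp only [RingHom.mapMatrix_apply, Matrix.map_apply, h2]
    rw [Matrix.one_apply]
    split <;> simp_all
  have hdet0 : PadicInt.toZModPow 1 B.det = 1 := by
    rw [RingHom.map_det, hmap, Matrix.det_one]
  have hdet1 : PadicInt.toZModPow 1 B.det = 0 := by
    have : B.det ∈ RingHom.ker (PadicInt.toZModPow 1 : ℤ_[ℓ] →+* ZMod (ℓ ^ 1)) := by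
      rw [PadicInt.ker_toZModPow, Ideal.mem_span_singleton, pow_one]
      exact hmem
    exact this
  haveI : Fact (1 < ℓ ^ 1) := ⟨by simpa using hp.one_lt⟩
  rw [hdet0] at hdet1
  exact one_ne_zero hdet1

lemma pow_cong (hodd : ℓ ≠ 2) {n : ℕ} (hn : 1 ≤ n) (A : Matrix (Fin 2) (Fin 2) ℤ_[ℓ]) :
    Cong (n + 2) ((1 + ((ℓ : ℤ_[ℓ]) ^ n) • A) ^ ℓ) (1 + ((ℓ : ℤ_[ℓ]) ^ (n + 1)) • A) := by
  have hp : Nat.Prime ℓ := Fact.out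
  have h3 : 3 ≤ ℓ := by have := hp.two_le; omega
  obtain ⟨m, rfl⟩ : ∃ m, ℓ = m + 3 := ⟨ℓ - 3, by omega⟩
  set c : ℤ_[m+3] := ((m+3 : ℕ) : ℤ_[m+3]) with hc
  set X : Matrix (Fin 2) (Fin 2) ℤ_[m+3] := (c ^ n) • A with hX
  have hcomm : Commute X (1 : Matrix (Fin 2) (Fin 2) ℤ_[m+3]) := Commute.one_right _
  have hexp := hcomm.add_pow (m+3)
  rw [show m + 3 + 1 = (m+2) + 1 + 1 from rfl, Finset.sum_range_succ',
    Finset.sum_range_succ'] at hexp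
  simp only [pow_zero, one_pow, mul_one, one_mul, zero_add, Nat.choose_zero_right, Nat.cast_one,
    Nat.choose_one_right, pow_one, Nat.sub_zero] at hexp
  have hmul : X * ((m+3 : ℕ) : Matrix (Fin 2) (Fin 2) ℤ_[m+3]) = c ^ (n+1) • A := by
    rw [← (Nat.cast_commute (m+3) X).eq, ← nsmul_eq_mul,
      ← Nat.cast_smul_eq_nsmul ℤ_[m+3], hX, smul_smul, ← hc, ← pow_succ']
  have hkey : (1 + X) ^ (m+3) - (1 + c ^ (n+1) • A) =
      ∑ x ∈ Finset.range (m + 2), X ^ (x + 1 + 1) *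
        (((m + 3).choose (x + 1 + 1) : ℕ) : Matrix (Fin 2) (Fin 2) ℤ_[m+3]) := by
    rw [add_comm (1 : Matrix (Fin 2) (Fin 2) ℤ_[m+3]) X, hexp, hmul]
    abel
  intro i j
  rw [hkey, Matrix.sum_apply]
  refine Finset.dvd_sum fun k hk => ?_
  rw [Finset.mem_range] at hk
  set C : ℕ := (m + 3).choose (k + 1 + 1) with hC
  have h1 : (X ^ (k + 1 + 1) * (C : Matrix (Fin 2) (Fin 2) ℤ_[m+3])) i j =
      (c ^ n) ^ (k + 2) * ((C : ℤ_[m+3]) * (A ^ (k + 2)) i j) := by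
    rw [hX, smul_pow, Matrix.smul_mul, Matrix.smul_apply, smul_eq_mul,
      ← (Nat.cast_commute C (A ^ (k + 1 + 1))).eq, ← nsmul_eq_mul, Matrix.smul_apply,
      nsmul_eq_mul]
  rw [h1, ← mul_assoc]
  refine Dvd.dvd.mul_right ?_ _
  by_cases hkm : k = m + 1
  · subst hkm
    have : C = 1 := by rw [hC]; exact Nat.choose_self _
    rw [this, Nat.cast_one, mul_one, ← pow_mul]
    refine pow_dvd_pow _ ?_
    nlinarith
  · have hdvd : (m + 3) ∣ C := hp.dvd_choose_self (by omega) (by omega)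
    obtain ⟨t, ht⟩ := hdvd
    have htc : (C : ℤ_[m+3]) = c * (t : ℤ_[m+3]) := by rw [ht]; push_cast [hc]; ring
    rw [htc, ← pow_mul, show n + 2 = (n + 1) + 1 from rfl, pow_succ]
    exact mul_dvd_mul (pow_dvd_pow _ (by nlinarith)) (Dvd.intro t rfl)

lemma approx (hodd : ℓ ≠ 2) (U : Subgroup (GL (Fin 2) ℤ_[ℓ]))
    (hsurj : Subgroup.map
        (Matrix.GeneralLinearGroup.map (PadicInt.toZModPow 2 : ℤ_[ℓ] →+* ZMod (ℓ ^ 2))) U =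
      Subgroup.map
        (Matrix.GeneralLinearGroup.map (PadicInt.toZModPow 2 : ℤ_[ℓ] →+* ZMod (ℓ ^ 2)))
        (Matrix.GeneralLinearGroup.map
          (PadicInt.toZModPow 1 : ℤ_[ℓ] →+* ZMod (ℓ ^ 1))).ker) :
    ∀ n : ℕ, ∀ x : GL (Fin 2) ℤ_[ℓ], Cong 1 (x : Matrix (Fin 2) (Fin 2) ℤ_[ℓ]) 1 →
      ∃ u ∈ U, Cong (n + 2) (u : Matrix (Fin 2) (Fin 2) ℤ_[ℓ])
        (x : Matrix (Fin 2) (Fin 2) ℤ_[ℓ]) := by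
  have hp : Nat.Prime ℓ := Fact.out
  have hc0 : (ℓ : ℤ_[ℓ]) ≠ 0 := Nat.cast_ne_zero.mpr hp.pos.ne'
  intro n
  induction n with
  | zero =>
    intro x hx
    have hxker : x ∈ (Matrix.GeneralLinearGroup.map
        (PadicInt.toZModPow 1 : ℤ_[ℓ] →+* ZMod (ℓ ^ 1))).ker := (mem_ker_iff_cong 1 x).2 hx
    have hmem : Matrix.GeneralLinearGroup.map
        (PadicInt.toZModPow 2 : ℤ_[ℓ] →+* ZMod (ℓ ^ 2)) x ∈ Subgroup.map
        (Matrix.GeneralLinearGroup.map (PadicInt.toZModPow 2 : ℤ_[ℓ] →+* ZMod (ℓ ^ 2))) U := by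
      rw [hsurj]; exact ⟨x, hxker, rfl⟩
    obtain ⟨u, hu, hux⟩ := hmem
    exact ⟨u, hu, (map_eq_iff_cong 2 u x).1 hux⟩
  | succ n ih =>
    intro x hx
    obtain ⟨u, hu, hcong⟩ := ih x hx
    have hyc : Cong (n + 2) ((x * u⁻¹ : GL (Fin 2) ℤ_[ℓ]) : Matrix (Fin 2) (Fin 2) ℤ_[ℓ]) 1 := by
      have h2 := hcong.symm.mul_right ((u⁻¹ : GL (Fin 2) ℤ_[ℓ]) : Matrix (Fin 2) (Fin 2) ℤ_[ℓ])
      have hxu : (x : Matrix (Fin 2) (Fin 2) ℤ_[ℓ]) * ((u⁻¹ : GL (Fin 2) ℤ_[ℓ]) :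
          Matrix (Fin 2) (Fin 2) ℤ_[ℓ]) = ((x * u⁻¹ : GL (Fin 2) ℤ_[ℓ]) :
          Matrix (Fin 2) (Fin 2) ℤ_[ℓ]) := rfl
      have huu : (u : Matrix (Fin 2) (Fin 2) ℤ_[ℓ]) * ((u⁻¹ : GL (Fin 2) ℤ_[ℓ]) :
          Matrix (Fin 2) (Fin 2) ℤ_[ℓ]) = 1 := by
        rw [← Units.val_mul, mul_inv_cancel, Units.val_one]
      rwa [hxu, huu] at h2
    obtain ⟨A, hA⟩ := hyc.exists_eq
    have hw1 : Cong 1 (1 + ((ℓ : ℤ_[ℓ]) ^ (n + 1)) • A) 1 := fun i j => by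
      simp only [add_sub_cancel_left, Matrix.smul_apply, smul_eq_mul]
      rw [pow_one]
      exact (dvd_pow_self (ℓ : ℤ_[ℓ]) (Nat.succ_ne_zero n)).mul_right _
    have hWu : IsUnit (1 + ((ℓ : ℤ_[ℓ]) ^ (n + 1)) • A) := isUnit_of_cong_one hw1
    set W : GL (Fin 2) ℤ_[ℓ] := hWu.unit with hWdef
    have hW : (W : Matrix (Fin 2) (Fin 2) ℤ_[ℓ]) = 1 + ((ℓ : ℤ_[ℓ]) ^ (n + 1)) • A :=
      hWu.unit_spec
    obtain ⟨v, hv, hvW⟩ := ih W (by rw [hW]; exact hw1)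
    -- v ≡ 1 mod ℓ^{n+1}
    have hWc : Cong (n + 1) (W : Matrix (Fin 2) (Fin 2) ℤ_[ℓ]) 1 := fun i j => by
      rw [hW]
      simp only [add_sub_cancel_left, Matrix.smul_apply, smul_eq_mul]
      exact (dvd_refl _).mul_right _
    have hvc : Cong (n + 1) (v : Matrix (Fin 2) (Fin 2) ℤ_[ℓ]) 1 :=
      (hvW.mono (by omega)).trans hWc
    obtain ⟨A', hA'⟩ := hvc.exists_eq
    -- A' ≡ A mod ℓ
    have hAA' : Cong 1 A' A := fun i j => by
      have h5 := hvW i j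
      rw [hA', hW] at h5
      have h6 : ((1 + (ℓ : ℤ_[ℓ]) ^ (n + 1) • A' : Matrix (Fin 2) (Fin 2) ℤ_[ℓ]) -
          (1 + (ℓ : ℤ_[ℓ]) ^ (n + 1) • A)) i j = (ℓ : ℤ_[ℓ]) ^ (n + 1) * ((A' - A) i j) := by
        simp only [Matrix.sub_apply, Matrix.add_apply, Matrix.smul_apply, smul_eq_mul]
        ring
      rw [h6, show n + 2 = (n + 1) + 1 from rfl, pow_succ] at h5
      simpa using (mul_dvd_mul_iff_left (pow_ne_zero (n + 1) hc0)).1 h5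
    -- v^ℓ ≡ 1 + ℓ^{n+2} A mod ℓ^{n+3}
    have hpow := pow_cong hodd (Nat.le_add_left 1 n) A'
    have hvpow : ((v ^ ℓ : GL (Fin 2) ℤ_[ℓ]) : Matrix (Fin 2) (Fin 2) ℤ_[ℓ]) =
        (1 + ((ℓ : ℤ_[ℓ]) ^ (n + 1)) • A') ^ ℓ := by
      rw [Units.val_pow_eq_pow_val, hA']
    have hstep1 : Cong (n + 3) ((v ^ ℓ : GL (Fin 2) ℤ_[ℓ]) : Matrix (Fin 2) (Fin 2) ℤ_[ℓ])
        (1 + ((ℓ : ℤ_[ℓ]) ^ (n + 2)) • A') := by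
      rw [hvpow]
      exact hpow
    have hstep2 : Cong (n + 3) (1 + ((ℓ : ℤ_[ℓ]) ^ (n + 2)) • A')
        ((x * u⁻¹ : GL (Fin 2) ℤ_[ℓ]) : Matrix (Fin 2) (Fin 2) ℤ_[ℓ]) := fun i j => by
      rw [hA]
      have h7 : ((1 + (ℓ : ℤ_[ℓ]) ^ (n + 2) • A' : Matrix (Fin 2) (Fin 2) ℤ_[ℓ]) -
          (1 + (ℓ : ℤ_[ℓ]) ^ (n + 2) • A)) i j = (ℓ : ℤ_[ℓ]) ^ (n + 2) * ((A' - A) i j) := by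
        simp only [Matrix.sub_apply, Matrix.add_apply, Matrix.smul_apply, smul_eq_mul]
        ring
      rw [h7, show n + 3 = (n + 2) + 1 from rfl, pow_succ]
      exact mul_dvd_mul (dvd_refl _) (by simpa using hAA' i j)
    have hfinal : Cong (n + 3)
        ((v ^ ℓ * u : GL (Fin 2) ℤ_[ℓ]) : Matrix (Fin 2) (Fin 2) ℤ_[ℓ])
        (x : Matrix (Fin 2) (Fin 2) ℤ_[ℓ]) := by
      have h8 := (hstep1.trans hstep2).mul_right (u : Matrix (Fin 2) (Fin 2) ℤ_[ℓ])
      have h9 : ((x * u⁻¹ : GL (Fin 2) ℤ_[ℓ]) : Matrix (Fin 2) (Fin 2) ℤ_[ℓ]) *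
          (u : Matrix (Fin 2) (Fin 2) ℤ_[ℓ]) = (x : Matrix (Fin 2) (Fin 2) ℤ_[ℓ]) := by
        rw [← Units.val_mul, inv_mul_cancel_right]
      rwa [h9] at h8
    exact ⟨v ^ ℓ * u, U.mul_mem (U.pow_mem hv ℓ) hu, hfinal⟩

lemma norm_le_of_dvd {k : ℕ} {z : ℤ_[ℓ]} (h : ((ℓ : ℤ_[ℓ]) ^ k) ∣ z) :
    ‖z‖ ≤ (ℓ : ℝ) ^ (-(k : ℤ)) := by
  rw [PadicInt.norm_le_pow_iff_mem_span_pow]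
  rwa [Ideal.mem_span_singleton]

lemma tendsto_of_cong (x : GL (Fin 2) ℤ_[ℓ]) (u : ℕ → GL (Fin 2) ℤ_[ℓ])
    (hc : ∀ n, Cong (n + 2) ((u n : Matrix (Fin 2) (Fin 2) ℤ_[ℓ]))
      (x : Matrix (Fin 2) (Fin 2) ℤ_[ℓ])) :
    Filter.Tendsto u Filter.atTop (nhds x) := by
  have hp : Nat.Prime ℓ := Fact.out
  -- The bound sequence tends to 0
  have hb : Filter.Tendsto (fun n : ℕ => (ℓ : ℝ) ^ (-((n : ℤ) + 2))) Filter.atTop (nhds 0) := by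
    have h1 : (ℓ : ℝ)⁻¹ < 1 := by
      rw [inv_lt_one_iff₀]
      right
      exact_mod_cast hp.one_lt
    have h0 : (0 : ℝ) ≤ (ℓ : ℝ)⁻¹ := by positivity
    have := tendsto_pow_atTop_nhds_zero_of_lt_one h0 h1
    have h2 := this.comp (Filter.tendsto_add_atTop_nat 2)
    convert h2 using 2 with n
    rw [Function.comp_apply, show (-((n : ℤ) + 2)) = -(((n + 2 : ℕ)) : ℤ) by push_cast; ring,
      _root_.zpow_neg, zpow_natCast, inv_pow]
  -- entrywise convergence of a matrix sequence dominated by hc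
  have key : ∀ (M : ℕ → Matrix (Fin 2) (Fin 2) ℤ_[ℓ]) (L : Matrix (Fin 2) (Fin 2) ℤ_[ℓ]),
      (∀ n, Cong (n + 2) (M n) L) →
      Filter.Tendsto M Filter.atTop (nhds L) := by
    intro M L hML
    apply tendsto_pi_nhds.2
    intro i
    rw [tendsto_pi_nhds]
    intro j
    rw [tendsto_iff_norm_sub_tendsto_zero]
    refine squeeze_zero_norm (fun n => ?_) hb
    rw [norm_norm]
    have hle2 := norm_le_of_dvd (hML n i j)
    rw [← Matrix.sub_apply]
    refine hle2.trans (le_of_eq ?_)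
    congr 1
  -- congruence for inverses
  have hinv : ∀ n, Cong (n + 2) (((u n)⁻¹ : GL (Fin 2) ℤ_[ℓ]) : Matrix (Fin 2) (Fin 2) ℤ_[ℓ])
      ((x⁻¹ : GL (Fin 2) ℤ_[ℓ]) : Matrix (Fin 2) (Fin 2) ℤ_[ℓ]) := by
    intro n
    have h1 := ((hc n).symm.mul_left (((u n)⁻¹ : GL (Fin 2) ℤ_[ℓ]) :
      Matrix (Fin 2) (Fin 2) ℤ_[ℓ])).mul_right ((x⁻¹ : GL (Fin 2) ℤ_[ℓ]) :
      Matrix (Fin 2) (Fin 2) ℤ_[ℓ])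
    rw [mul_assoc, ← Units.val_mul x x⁻¹, mul_inv_cancel, Units.val_one, mul_one,
      ← Units.val_mul ((u n)⁻¹) (u n), inv_mul_cancel, Units.val_one, one_mul] at h1
    exact h1
  -- now lift to units
  rw [Units.isInducing_embedProduct.tendsto_nhds_iff]
  have hfst := key (fun n => ((u n : GL (Fin 2) ℤ_[ℓ]) : Matrix (Fin 2) (Fin 2) ℤ_[ℓ]))
    (x : Matrix (Fin 2) (Fin 2) ℤ_[ℓ]) hc
  have hsnd0 := key (fun n => (((u n)⁻¹ : GL (Fin 2) ℤ_[ℓ]) : Matrix (Fin 2) (Fin 2) ℤ_[ℓ]))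
    ((x⁻¹ : GL (Fin 2) ℤ_[ℓ]) : Matrix (Fin 2) (Fin 2) ℤ_[ℓ]) hinv
  have hsnd := (MulOpposite.continuous_op.tendsto _).comp hsnd0
  exact hfst.prodMk_nhds hsnd

end VLAux


open Matrix

/-- For an odd prime `ℓ`, a closed subgroup `U` of `V_ℓ = I + ℓM₂(ℤ_ℓ)` (the kernel of
reduction mod `ℓ`) which surjects onto `V_ℓ/V_{ℓ²}` (i.e. has the same image mod `ℓ²`
as `V_ℓ`) equals `V_ℓ`. -/
theorem closed_subgroup_of_Vl (ℓ : ℕ) [Fact (Nat.Prime ℓ)] (hodd : ℓ ≠ 2)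
    (U : Subgroup (GL (Fin 2) ℤ_[ℓ])) (hclosed : IsClosed (U : Set (GL (Fin 2) ℤ_[ℓ])))
    (hle : U ≤ (Matrix.GeneralLinearGroup.map
      (PadicInt.toZModPow 1 : ℤ_[ℓ] →+* ZMod (ℓ ^ 1))).ker)
    (hsurj : Subgroup.map
        (Matrix.GeneralLinearGroup.map (PadicInt.toZModPow 2 : ℤ_[ℓ] →+* ZMod (ℓ ^ 2))) U =
      Subgroup.map
        (Matrix.GeneralLinearGroup.map (PadicInt.toZModPow 2 : ℤ_[ℓ] →+* ZMod (ℓ ^ 2)))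
        (Matrix.GeneralLinearGroup.map
          (PadicInt.toZModPow 1 : ℤ_[ℓ] →+* ZMod (ℓ ^ 1))).ker) :
    U = (Matrix.GeneralLinearGroup.map
      (PadicInt.toZModPow 1 : ℤ_[ℓ] →+* ZMod (ℓ ^ 1))).ker := by
  refine le_antisymm hle ?_
  intro x hx
  have hx1 : VLAux.Cong 1 (x : Matrix (Fin 2) (Fin 2) ℤ_[ℓ]) 1 :=
    (VLAux.mem_ker_iff_cong 1 x).1 hx
  have happrox := VLAux.approx hodd U hsurj
  choose u hu hcong using fun n => happrox n x hx1
  have ht := VLAux.tendsto_of_cong x u hcong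
  exact hclosed.mem_of_tendsto ht (Filter.Eventually.of_forall hu)
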